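/- Let W : ℝ → ℝ be twice differentiable and strictly positive, let ω : ℝ → ℝ, fix τ₀ ∈ ℝ, and define f : ℝ → ℂ by f(τ) = (2·W(τ))^{−1/2}·exp(i·∫_{τ₀}^{τ} W(s) ds). Then f''(τ) + ω(τ)²·f(τ) = 0 holds for all τ ∈ ℝ if and only if W(τ)² = ω(τ)² − (1/2)·(W''(τ)/W(τ) − (3/2)·(W'(τ)/W(τ))²) holds for all τ ∈ ℝ. -/

import Mathlib

/-- For the WKB ansatz `f(τ) = (2W(τ))^(-1/2)·exp(i ∫_{τ₀}^τ W(s) ds)` with `W` twice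
differentiable and strictly positive, `f` solves the oscillator equation `f'' + ω²·f = 0`
for all `τ` iff `W` solves the nonlinear equation
`W² = ω² − (1/2)·(W''/W − (3/2)·(W'/W)²)` for all `τ`. -/
theorem wkb_equation_iff (W ω : ℝ → ℝ) (τ₀ : ℝ)
    (hWd : Differentiable ℝ W) (hWd2 : Differentiable ℝ (deriv W))
    (hWpos : ∀ τ : ℝ, 0 < W τ)
    (f : ℝ → ℂ)
    (hf : ∀ τ : ℝ, f τ = (((2 * W τ) ^ (-(1/2) : ℝ) : ℝ) : ℂ) *
      Complex.exp (Complex.I * ((∫ s in τ₀..τ, W s : ℝ) : ℂ))) :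
    (∀ τ : ℝ, deriv (deriv f) τ + ((ω τ : ℂ))^2 * f τ = 0) ↔
    (∀ τ : ℝ, (W τ)^2 = (ω τ)^2
      - (1/2) * (deriv (deriv W) τ / W τ - (3/2) * (deriv W τ / W τ)^2)) := by
  set θ : ℝ → ℝ := fun τ => ∫ s in τ₀..τ, W s with hθdef
  set A : ℝ → ℝ := fun τ => (2 * W τ) ^ (-(1/2) : ℝ) with hAdef
  set A₁ : ℝ → ℝ := fun τ => -(deriv W τ) * (2 * W τ) ^ (-(3/2) : ℝ) with hA₁def
  set A₂ : ℝ → ℝ := fun τ =>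
    3 * (deriv W τ)^2 * (2 * W τ) ^ (-(5/2) : ℝ)
      - deriv (deriv W) τ * (2 * W τ) ^ (-(3/2) : ℝ) with hA₂def
  have h2W : ∀ τ, (0:ℝ) < 2 * W τ := fun τ => by have := hWpos τ; linarith
  have h2W' : ∀ τ, (2 * W τ : ℝ) ≠ 0 := fun τ => (h2W τ).ne'
  have hW2 : ∀ τ, HasDerivAt (fun τ => 2 * W τ) (2 * deriv W τ) τ := fun τ =>
    ((hWd τ).hasDerivAt).const_mul 2
  have hA : ∀ τ, HasDerivAt A (A₁ τ) τ := by
    intro τ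
    have := (hW2 τ).rpow_const (p := (-(1/2) : ℝ)) (Or.inl (h2W' τ))
    convert this using 1
    have : (-(1/2) : ℝ) - 1 = -(3/2) := by norm_num
    rw [hA₁def]
    simp only []
    rw [← this]
    ring
  have hA₁ : ∀ τ, HasDerivAt A₁ (A₂ τ) τ := by
    intro τ
    have hr := (hW2 τ).rpow_const (p := (-(3/2) : ℝ)) (Or.inl (h2W' τ))
    have hd : HasDerivAt (fun τ => -(deriv W τ)) (-(deriv (deriv W) τ)) τ :=
      ((hWd2 τ).hasDerivAt).neg
    have := hd.mul hr
    convert this using 1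
    · rfl
    · rfl
    · rfl
    have h32 : (-(3/2) : ℝ) - 1 = -(5/2) := by norm_num
    rw [hA₂def]
    simp only []
    rw [← h32]
    have h35 : (2 * W τ) ^ ((-(3/2):ℝ) - 1) * (2 * W τ) = (2 * W τ) ^ (-(3/2):ℝ) := by
      rw [← Real.rpow_add_one (h2W' τ)]; norm_num
    nlinarith [h35]
  have hθ : ∀ τ, HasDerivAt θ (W τ) τ := fun τ =>
    (hWd.continuous.integral_hasStrictDerivAt τ₀ τ).hasDerivAt
  have hfA : ∀ τ, f τ = (A τ : ℂ) * Complex.exp (Complex.I * (θ τ : ℂ)) := hf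
  have hE : ∀ τ, HasDerivAt (fun τ => Complex.exp (Complex.I * (θ τ : ℂ)))
      (Complex.I * (W τ : ℂ) * Complex.exp (Complex.I * (θ τ : ℂ))) τ := by
    intro τ
    have h1 : HasDerivAt (fun τ => Complex.I * (θ τ : ℂ)) (Complex.I * (W τ : ℂ)) τ := by
      simpa using ((hθ τ).ofReal_comp).const_mul Complex.I
    have := h1.cexp
    convert this using 1; ring
  set F₁ : ℝ → ℂ := fun τ =>
    ((A₁ τ : ℂ) + Complex.I * (W τ : ℂ) * (A τ : ℂ)) * Complex.exp (Complex.I * (θ τ : ℂ))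
    with hF₁def
  have hF : ∀ τ, HasDerivAt f (F₁ τ) τ := by
    intro τ
    have : HasDerivAt (fun τ => (A τ : ℂ) * Complex.exp (Complex.I * (θ τ : ℂ))) (F₁ τ) τ := by
      have := ((hA τ).ofReal_comp).mul (hE τ)
      convert this using 1
      · rfl
      · rfl
      rw [hF₁def]; ring
    exact this.congr_of_eventuallyEq (Filter.Eventually.of_forall hfA)
  have hderivf : deriv f = F₁ := funext fun τ => (hF τ).deriv
  set F₂ : ℝ → ℂ := fun τ =>
    ((A₂ τ : ℂ) + Complex.I * ((deriv W τ : ℝ) : ℂ) * (A τ : ℂ)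
      + 2 * Complex.I * (W τ : ℂ) * (A₁ τ : ℂ)
      - (W τ : ℂ)^2 * (A τ : ℂ)) * Complex.exp (Complex.I * (θ τ : ℂ)) with hF₂def
  have hF₂ : ∀ τ, deriv (deriv f) τ = F₂ τ := by
    intro τ
    rw [hderivf]
    have hg : HasDerivAt (fun τ => (A₁ τ : ℂ) + Complex.I * ((W τ : ℂ) * (A τ : ℂ)))
        ((A₂ τ : ℂ) + Complex.I * (((deriv W τ : ℝ) : ℂ) * (A τ : ℂ) + (W τ : ℂ) * (A₁ τ : ℂ))) τ :=
      ((hA₁ τ).ofReal_comp).add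
        ((((hWd τ).hasDerivAt).ofReal_comp.mul ((hA τ).ofReal_comp)).const_mul Complex.I)
    have hprod := hg.mul (hE τ)
    have hF₁deriv : HasDerivAt F₁
        (((A₂ τ : ℂ) + Complex.I * (((deriv W τ : ℝ) : ℂ) * (A τ : ℂ) + (W τ : ℂ) * (A₁ τ : ℂ)))
            * Complex.exp (Complex.I * (θ τ : ℂ))
          + ((A₁ τ : ℂ) + Complex.I * ((W τ : ℂ) * (A τ : ℂ)))
            * (Complex.I * (W τ : ℂ) * Complex.exp (Complex.I * (θ τ : ℂ)))) τ :=
      hprod.congr_of_eventuallyEq (Filter.Eventually.of_forall fun x => by rw [hF₁def]; simp only [Pi.mul_apply]; ring)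
    rw [hF₁deriv.deriv, hF₂def]
    simp only []
    linear_combination (Complex.exp (Complex.I * (θ τ : ℂ)) * ((W τ : ℂ))^2 * (A τ : ℂ))
      * Complex.I_sq
  have hcancel : ∀ τ, deriv W τ * A τ + 2 * W τ * A₁ τ = 0 := by
    intro τ
    have h31 : (2 * W τ) ^ (-(3/2) : ℝ) * (2 * W τ) = (2 * W τ) ^ (-(1/2) : ℝ) := by
      rw [← Real.rpow_add_one (h2W' τ)]; norm_num
    rw [hAdef, hA₁def]
    simp only []
    linear_combination -(deriv W τ) * h31
  have key : ∀ τ, deriv (deriv f) τ + ((ω τ : ℂ))^2 * f τ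
      = ((A₂ τ + ((ω τ)^2 - (W τ)^2) * A τ : ℝ) : ℂ) * Complex.exp (Complex.I * (θ τ : ℂ)) := by
    intro τ
    rw [hF₂ τ, hfA τ, hF₂def]
    have hc : ((deriv W τ : ℝ) : ℂ) * (A τ : ℂ) + 2 * (W τ : ℂ) * (A₁ τ : ℂ) = 0 := by
      calc ((deriv W τ : ℝ) : ℂ) * (A τ : ℂ) + 2 * (W τ : ℂ) * (A₁ τ : ℂ)
          = ((deriv W τ * A τ + 2 * W τ * A₁ τ : ℝ) : ℂ) := by push_cast; ring
        _ = 0 := by rw [hcancel τ]; simp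
    simp only []
    push_cast
    linear_combination (Complex.I * Complex.exp (Complex.I * (θ τ : ℂ))) * hc
  constructor
  · intro h τ
    have h0 := h τ
    rw [key τ, mul_eq_zero] at h0
    have h1 : A₂ τ + ((ω τ)^2 - (W τ)^2) * A τ = 0 := by
      rcases h0 with h0 | h0
      · exact_mod_cast h0
      · exact absurd h0 (Complex.exp_ne_zero _)
    -- real algebra
    set x := W τ with hx
    set d := deriv W τ with hd
    set d2 := deriv (deriv W) τ with hd2
    have hxpos := hWpos τ
    have h2xpos : (0:ℝ) < 2 * x := h2W τ
    have h2x : (2 * x : ℝ) ≠ 0 := h2W' τ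
    have hx0 : (x:ℝ) ≠ 0 := hxpos.ne'
    have hu : (0:ℝ) < (2 * x) ^ (-(1/2) : ℝ) := Real.rpow_pos_of_pos h2xpos _
    have h3 : (2 * x) ^ (-(3/2) : ℝ) = (2 * x) ^ (-(1/2) : ℝ) / (2 * x) := by
      rw [eq_div_iff h2x, ← Real.rpow_add_one h2x]; norm_num
    have h5 : (2 * x) ^ (-(5/2) : ℝ) = (2 * x) ^ (-(1/2) : ℝ) / (2 * x) ^ 2 := by
      rw [eq_div_iff (pow_ne_zero 2 h2x), ← Real.rpow_natCast (2*x) 2,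
        ← Real.rpow_add h2xpos]
      norm_num
    have e1 : A₂ τ + ((ω τ)^2 - x^2) * A τ = (2 * x) ^ (-(1/2) : ℝ) *
        (3 * d^2 / (2*x)^2 - d2 / (2*x) + ((ω τ)^2 - x^2)) := by
      rw [hA₂def, hAdef]
      simp only [← hx, ← hd, ← hd2]
      rw [h3, h5]
      ring
    rw [e1, mul_eq_zero] at h1
    have e2 : d2/(2*x) = (1/2)*(d2 / x) := by ring
    have e3 : 3*d^2/(2*x)^2 - (3/4)*(d / x)^2 = 0 := by
      field_simp
      ring
    rcases h1 with h1 | h1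
    · exact absurd h1 hu.ne'
    · linarith
  · intro h τ
    rw [key τ]
    set x := W τ with hx
    set d := deriv W τ with hd
    set d2 := deriv (deriv W) τ with hd2
    have hω := h τ
    have hxpos := hWpos τ
    have h2xpos : (0:ℝ) < 2 * x := h2W τ
    have h2x : (2 * x : ℝ) ≠ 0 := h2W' τ
    have hx0 : (x:ℝ) ≠ 0 := hxpos.ne'
    have h3 : (2 * x) ^ (-(3/2) : ℝ) = (2 * x) ^ (-(1/2) : ℝ) / (2 * x) := by
      rw [eq_div_iff h2x, ← Real.rpow_add_one h2x]; norm_num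
    have h5 : (2 * x) ^ (-(5/2) : ℝ) = (2 * x) ^ (-(1/2) : ℝ) / (2 * x) ^ 2 := by
      rw [eq_div_iff (pow_ne_zero 2 h2x), ← Real.rpow_natCast (2*x) 2,
        ← Real.rpow_add h2xpos]
      norm_num
    have e2 : d2/(2*x) = (1/2)*(d2 / x) := by ring
    have e3 : 3*d^2/(2*x)^2 - (3/4)*(d / x)^2 = 0 := by
      field_simp
      ring
    have inner : 3 * d^2 / (2*x)^2 - d2 / (2*x) + ((ω τ)^2 - x^2) = 0 := by linarith
    have h1 : A₂ τ + ((ω τ)^2 - x^2) * A τ = 0 := by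
      rw [hA₂def, hAdef]
      simp only [← hx, ← hd, ← hd2]
      rw [h3, h5]
      linear_combination ((2 * x) ^ (-(1/2) : ℝ)) * inner
    have hc : ((A₂ τ + ((ω τ)^2 - x^2) * A τ : ℝ) : ℂ) = 0 := by exact_mod_cast h1
    push_cast at hc ⊢
    rw [show ((A₂ τ : ℂ) + (((ω τ):ℂ)^2 - ((x:ℝ):ℂ)^2) * (A τ : ℂ)) = 0 from hc]
    ring
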